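/- arXiv:2209.01888 — 2 statements merged into one kernel-verified Lean document; each statement's English description precedes it below -/
import Mathlib

section
/- (Performance core of Theorem 1.) Let n_ψ, n_e, n_z, n_f ∈ ℕ, let P be an n_ψ×n_ψ real symmetric positive definite matrix, and let γ > 0, σ > 0. Define the block-diagonal matrices R₁ = diag(P, I_{n_e}, γ²·I_{n_f}) of size (n_ψ+n_e+n_f) and R₂ = diag(P, σ·I_{n_e}, I_{n_z}) of size (n_ψ+n_e+n_z). Let (H_k)_{k∈ℕ} be a sequence of (n_ψ+n_e+n_z)×(n_ψ+n_e+n_f) real matrices such that R₁ − H_kᵀ R₂ H_k is positive semidefinite for every k. Let ψ : ℕ → ℝ^{n_ψ}, e : ℕ → ℝ^{n_e}, f : ℕ → ℝ^{n_f}, η : ℕ → ℝ^{n_e}, z : ℕ → ℝ^{n_z} be sequences with ψ(0) = 0 satisfying, for every k, the concatenated identity (ψ(k+1), η(k), z(k)) = H_k · (ψ(k), e(k), f(k)) and the event-trigger condition ‖e(k)‖₂² ≤ σ·‖η(k)‖₂². Then for every n, ∑_{k=0}^{n−1} ‖z(k)‖₂² ≤ γ² · ∑_{k=0}^{n−1}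 ‖f(k)‖₂². -/
open Matrix

lemma selim_dot {α β : Type*} [Fintype α] [Fintype β] (a b : α → ℝ) (c d : β → ℝ) :
    Sum.elim a c ⬝ᵥ Sum.elim b d = a ⬝ᵥ b + c ⬝ᵥ d := by
  simp [dotProduct, Fintype.sum_sum_type]

lemma quad_form {m p q : ℕ} (P : Matrix (Fin m) (Fin m) ℝ) (s t : ℝ)
    (a : Fin m → ℝ) (b : Fin p → ℝ) (c : Fin q → ℝ) :
    Sum.elim a (Sum.elim b c) ⬝ᵥ
      ((Matrix.fromBlocks P 0 0 (Matrix.fromBlocks (s • (1 : Matrix (Fin p) (Fin p) ℝ)) 0 0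
        (t • (1 : Matrix (Fin q) (Fin q) ℝ)))) *ᵥ Sum.elim a (Sum.elim b c))
      = a ⬝ᵥ (P *ᵥ a) + s * (b ⬝ᵥ b) + t * (c ⬝ᵥ c) := by
  simp [Matrix.fromBlocks_mulVec, selim_dot, smul_mulVec, dotProduct_smul, smul_eq_mul]
  ring

/-- Performance core of Theorem 1: a per-step quadratic dissipation certificate
`R₁ − H_kᵀ R₂ H_k ⪰ 0`, together with the event-trigger condition
`‖e k‖₂² ≤ σ‖η k‖₂²`, yields the finite-horizon ℓ₂-gain bound
`∑_{k<n} ‖z k‖₂² ≤ γ² ∑_{k<n} ‖f k‖₂²`. -/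
theorem stmt_8 {nψ ne nz nf : ℕ}
    (P : Matrix (Fin nψ) (Fin nψ) ℝ) (hP : P.PosDef)
    (γ σ : ℝ) (hγ : 0 < γ) (hσ : 0 < σ)
    (H : ℕ → Matrix (Fin nψ ⊕ (Fin ne ⊕ Fin nz)) (Fin nψ ⊕ (Fin ne ⊕ Fin nf)) ℝ)
    (R₁ : Matrix (Fin nψ ⊕ (Fin ne ⊕ Fin nf)) (Fin nψ ⊕ (Fin ne ⊕ Fin nf)) ℝ)
    (R₂ : Matrix (Fin nψ ⊕ (Fin ne ⊕ Fin nz)) (Fin nψ ⊕ (Fin ne ⊕ Fin nz)) ℝ)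
    (hR₁ : R₁ = Matrix.fromBlocks P 0 0
      (Matrix.fromBlocks 1 0 0 (γ ^ 2 • (1 : Matrix (Fin nf) (Fin nf) ℝ))))
    (hR₂ : R₂ = Matrix.fromBlocks P 0 0
      (Matrix.fromBlocks (σ • (1 : Matrix (Fin ne) (Fin ne) ℝ)) 0 0 1))
    (hLMI : ∀ k, (R₁ - (H k)ᵀ * R₂ * H k).PosSemidef)
    (ψ : ℕ → Fin nψ → ℝ) (e : ℕ → Fin ne → ℝ) (f : ℕ → Fin nf → ℝ)
    (η : ℕ → Fin ne → ℝ) (z : ℕ → Fin nz → ℝ)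
    (hψ0 : ψ 0 = 0)
    (hdyn : ∀ k, Sum.elim (ψ (k + 1)) (Sum.elim (η k) (z k)) =
      H k *ᵥ Sum.elim (ψ k) (Sum.elim (e k) (f k)))
    (hET : ∀ k, e k ⬝ᵥ e k ≤ σ * (η k ⬝ᵥ η k)) :
    ∀ n, ∑ k ∈ Finset.range n, z k ⬝ᵥ z k ≤
      γ ^ 2 * ∑ k ∈ Finset.range n, f k ⬝ᵥ f k := by
  set V : ℕ → ℝ := fun k => ψ k ⬝ᵥ (P *ᵥ ψ k) with hV
  have hstep : ∀ k, z k ⬝ᵥ z k + V (k + 1) ≤ γ ^ 2 * (f k ⬝ᵥ f k) + V k := by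
    intro k
    set x := Sum.elim (ψ k) (Sum.elim (e k) (f k)) with hx
    have h0 := (hLMI k).dotProduct_mulVec_nonneg x
    simp only [RCLike.star_def, star_trivial] at h0
    have hexp : x ⬝ᵥ ((R₁ - (H k)ᵀ * R₂ * H k) *ᵥ x)
        = x ⬝ᵥ (R₁ *ᵥ x) - (H k *ᵥ x) ⬝ᵥ (R₂ *ᵥ (H k *ᵥ x)) := by
      rw [sub_mulVec, dotProduct_sub]
      congr 1
      have hmv : ((H k)ᵀ * R₂ * H k) *ᵥ x = (H k)ᵀ *ᵥ (R₂ *ᵥ (H k *ᵥ x)) := by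
        rw [← Matrix.mulVec_mulVec, ← Matrix.mulVec_mulVec]
      rw [hmv, Matrix.dotProduct_mulVec, Matrix.vecMul_transpose]
    have hHx : H k *ᵥ x = Sum.elim (ψ (k + 1)) (Sum.elim (η k) (z k)) := (hdyn k).symm
    have h1 : x ⬝ᵥ (R₁ *ᵥ x) = ψ k ⬝ᵥ (P *ᵥ ψ k) + 1 * (e k ⬝ᵥ e k) + γ ^ 2 * (f k ⬝ᵥ f k) := by
      rw [hR₁, hx, ← one_smul ℝ (1 : Matrix (Fin ne) (Fin ne) ℝ)]
      exact quad_form P 1 (γ ^ 2) _ _ _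
    have h2 : (H k *ᵥ x) ⬝ᵥ (R₂ *ᵥ (H k *ᵥ x))
        = ψ (k+1) ⬝ᵥ (P *ᵥ ψ (k+1)) + σ * (η k ⬝ᵥ η k) + 1 * (z k ⬝ᵥ z k) := by
      rw [hHx, hR₂, ← one_smul ℝ (1 : Matrix (Fin nz) (Fin nz) ℝ)]
      exact quad_form P σ 1 _ _ _
    rw [hexp, h1, h2] at h0
    have := hET k
    simp only [hV]
    nlinarith [hET k]
  intro n
  have key : ∀ n, ∑ k ∈ Finset.range n, z k ⬝ᵥ z k + V n ≤
      γ ^ 2 * ∑ k ∈ Finset.range n, f k ⬝ᵥ f k + V 0 := by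
    intro n
    induction n with
    | zero => simp
    | succ n ih =>
      rw [Finset.sum_range_succ, Finset.sum_range_succ]
      have := hstep n
      linarith
  have hV0 : V 0 = 0 := by simp [hV, hψ0]
  have hVn : 0 ≤ V n := by
    rcases eq_or_ne (ψ n) 0 with h | h
    · simp [hV, h]
    · exact le_of_lt (hP.dotProduct_mulVec_pos h)
  have := key n
  rw [hV0] at this
  linarith
end

section
/- (Stability core of Theorem 1.) Let n_ψ, n_e, n_z, n_f ∈ ℕ, let P be an n_ψ×n_ψ real symmetric positive definite matrix, let γ > 0, σ > 0 and ε > 0. Define R₁ = diag(P, I_{n_e}, γ²·I_{n_f}) and R₂ = diag(P, σ·I_{n_e}, I_{n_z}) as block-diagonal matrices. Let (H_k)_{k∈ℕ} be a sequence of (n_ψ+n_e+n_z)×(n_ψ+n_e+n_f) real matrices such that R₁ − ε·I − H_kᵀ R₂ H_k is positive semidefinite for every k. Let ψ : ℕ → ℝ^{n_ψ}, e : ℕ → ℝ^{n_e}, η : ℕ → ℝ^{n_e}, z : ℕ → ℝ^{n_z} be sequences such that for every k, (ψ(k+1), η(k), z(k)) = H_k · (ψ(k), e(k), 0) (zero exogenous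 input) and ‖e(k)‖₂² ≤ σ·‖η(k)‖₂². Then ψ(k) → 0 as k → ∞. -/
open Matrix

/-- Stability core of Theorem 1: a strict per-step quadratic dissipation certificate
`R₁ − ε I − H_kᵀ R₂ H_k ⪰ 0`, together with the event-trigger condition and zero
exogenous input, yields `ψ k → 0`. -/
theorem stmt_9 {nψ ne nz nf : ℕ}
    (P : Matrix (Fin nψ) (Fin nψ) ℝ) (hP : P.PosDef)
    (γ σ ε : ℝ) (hγ : 0 < γ) (hσ : 0 < σ) (hε : 0 < ε)
    (H : ℕ → Matrix (Fin nψ ⊕ (Fin ne ⊕ Fin nz)) (Fin nψ ⊕ (Fin ne ⊕ Fin nf)) ℝ)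
    (R₁ : Matrix (Fin nψ ⊕ (Fin ne ⊕ Fin nf)) (Fin nψ ⊕ (Fin ne ⊕ Fin nf)) ℝ)
    (R₂ : Matrix (Fin nψ ⊕ (Fin ne ⊕ Fin nz)) (Fin nψ ⊕ (Fin ne ⊕ Fin nz)) ℝ)
    (hR₁ : R₁ = Matrix.fromBlocks P 0 0
      (Matrix.fromBlocks 1 0 0 (γ ^ 2 • (1 : Matrix (Fin nf) (Fin nf) ℝ))))
    (hR₂ : R₂ = Matrix.fromBlocks P 0 0
      (Matrix.fromBlocks (σ • (1 : Matrix (Fin ne) (Fin ne) ℝ)) 0 0 1))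
    (hLMI : ∀ k, (R₁ - ε • (1 : Matrix (Fin nψ ⊕ (Fin ne ⊕ Fin nf))
      (Fin nψ ⊕ (Fin ne ⊕ Fin nf)) ℝ) - (H k)ᵀ * R₂ * H k).PosSemidef)
    (ψ : ℕ → Fin nψ → ℝ) (e : ℕ → Fin ne → ℝ)
    (η : ℕ → Fin ne → ℝ) (z : ℕ → Fin nz → ℝ)
    (hdyn : ∀ k, Sum.elim (ψ (k + 1)) (Sum.elim (η k) (z k)) =
      H k *ᵥ Sum.elim (ψ k) (Sum.elim (e k) (0 : Fin nf → ℝ)))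
    (hET : ∀ k, e k ⬝ᵥ e k ≤ σ * (η k ⬝ᵥ η k)) :
    Filter.Tendsto ψ Filter.atTop (nhds 0) := by
  set V : ℕ → ℝ := fun k => ψ k ⬝ᵥ (P *ᵥ ψ k) with hV
  set a : ℕ → ℝ := fun k => ψ k ⬝ᵥ ψ k with ha
  have hVnonneg : ∀ k, 0 ≤ V k := by
    intro k
    have := hP.posSemidef.dotProduct_mulVec_nonneg (ψ k)
    simpa using this
  have dps : ∀ {m : ℕ} (v : Fin m → ℝ), 0 ≤ v ⬝ᵥ v := fun v =>
    Finset.sum_nonneg fun j _ => mul_self_nonneg _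
  have hanonneg : ∀ k, 0 ≤ a k := fun k => dps (ψ k)
  -- step inequality
  have hstep : ∀ k, V (k + 1) + ε * a k ≤ V k := by
    intro k
    set x : (Fin nψ ⊕ (Fin ne ⊕ Fin nf)) → ℝ := Sum.elim (ψ k) (Sum.elim (e k) 0) with hx
    have h0 := (hLMI k).dotProduct_mulVec_nonneg x
    have hQ1 : x ⬝ᵥ (R₁ *ᵥ x) = V k + e k ⬝ᵥ e k := by
      rw [hR₁, hx, fromBlocks_mulVec, fromBlocks_mulVec]
      simp [sumElim_dotProduct_sumElim, hV]
    have hy : H k *ᵥ x = Sum.elim (ψ (k+1)) (Sum.elim (η k) (z k)) := (hdyn k).symm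
    have hQ2 : x ⬝ᵥ (((H k)ᵀ * R₂ * H k) *ᵥ x) =
        V (k+1) + (σ * (η k ⬝ᵥ η k) + z k ⬝ᵥ z k) := by
      rw [← mulVec_mulVec, ← mulVec_mulVec, dotProduct_mulVec, vecMul_transpose, hy,
        hR₂, fromBlocks_mulVec, fromBlocks_mulVec]
      simp [sumElim_dotProduct_sumElim, smul_mulVec, one_mulVec,
        dotProduct_smul, smul_eq_mul, hV]
    have hxx : x ⬝ᵥ x = a k + e k ⬝ᵥ e k := by
      rw [hx]; simp [sumElim_dotProduct_sumElim, ha]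
    have hexp : x ⬝ᵥ ((R₁ - ε • (1 : Matrix _ _ ℝ) - (H k)ᵀ * R₂ * H k) *ᵥ x)
        = (V k + e k ⬝ᵥ e k) - ε * (a k + e k ⬝ᵥ e k)
          - (V (k+1) + (σ * (η k ⬝ᵥ η k) + z k ⬝ᵥ z k)) := by
      rw [sub_mulVec, sub_mulVec, dotProduct_sub, dotProduct_sub, hQ1, hQ2, smul_mulVec,
        one_mulVec, dotProduct_smul, smul_eq_mul, hxx]
    simp only [star_trivial] at h0
    rw [hexp] at h0
    have h1 := hET k
    have h2 : 0 ≤ z k ⬝ᵥ z k := dps _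
    have h3 : 0 ≤ e k ⬝ᵥ e k := dps _
    nlinarith [hε.le]
  -- summability of a
  have hsum : ∀ n, ∑ k ∈ Finset.range n, ε * a k ≤ V 0 := by
    intro n
    have : ∑ k ∈ Finset.range n, ε * a k ≤ ∑ k ∈ Finset.range n, (V k - V (k+1)) := by
      apply Finset.sum_le_sum
      intro k _
      linarith [hstep k]
    rw [Finset.sum_range_sub'] at this
    linarith [hVnonneg n]
  have hsummable : Summable (fun k => ε * a k) :=
    summable_of_sum_range_le (fun k => mul_nonneg hε.le (hanonneg k)) hsum
  have htend : Filter.Tendsto (fun k => ε * a k) Filter.atTop (nhds 0) :=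
    hsummable.tendsto_atTop_zero
  have hatend : Filter.Tendsto a Filter.atTop (nhds 0) := by
    have := htend.const_mul ε⁻¹
    simpa [mul_assoc, inv_mul_cancel_left₀ hε.ne'] using this
  rw [tendsto_pi_nhds]
  intro i
  have hsq : Filter.Tendsto (fun k => (ψ k i)^2) Filter.atTop (nhds 0) := by
    apply tendsto_of_tendsto_of_tendsto_of_le_of_le tendsto_const_nhds hatend
    · intro k; positivity
    · intro k
      show (ψ k i)^2 ≤ a k
      rw [ha, sq]
      exact Finset.single_le_sum (f := fun j => ψ k j * ψ k j)
        (fun j _ => mul_self_nonneg _) (Finset.mem_univ i)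
  have habs : Filter.Tendsto (fun k => |ψ k i|) Filter.atTop (nhds 0) := by
    have := (Real.continuous_sqrt.tendsto 0).comp hsq
    simpa [Function.comp_def, Real.sqrt_sq_eq_abs] using this
  simpa using tendsto_zero_iff_abs_tendsto_zero _ |>.2 habs
end
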